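/- arXiv:2406.07926 — 3 statements merged into one kernel-verified Lean document; each statement's English description precedes it below -/
import Mathlib

section
/- For any finite simple graph G with n vertices and m edges, the sum over all vertices of the square of their degrees is at most m(2m/(n-1) + n - 2), assuming n ≥ 2. -/
open Finset

/-- de Caen's bound: for a finite simple graph with `n ≥ 2` vertices and `m` edges,
`∑ d(v)^2 ≤ m (2m/(n-1) + n - 2)`. -/
theorem deCaen_bound {V : Type*} [Fintype V] [DecidableEq V]
    (G : SimpleGraph V) [DecidableRel G.Adj]
    (n m : ℕ) (hn : n = Fintype.card V) (hm : m = G.edgeFinset.card) (hn2 : 2 ≤ n) :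
    ∑ v : V, (G.degree v : ℝ) ^ 2 ≤ (m : ℝ) * (2 * m / ((n : ℝ) - 1) + (n : ℝ) - 2) := by
  classical
  set N : ℝ := (n : ℝ) with hN
  set M : ℝ := (m : ℝ) with hM
  set a : V → V → ℝ := fun i k => if G.Adj i k then 1 else 0 with ha
  have ha_symm : ∀ i k, a i k = a k i := by
    intro i k
    simp only [ha]
    by_cases h : G.Adj i k
    · simp [h, h.symm]
    · have h' : ¬ G.Adj k i := fun h' => h h'.symm
      simp [h, h']
  have ha_self : ∀ i, a i i = 0 := by intro i; simp [ha]
  have ha_sq : ∀ i k, a i k ^ 2 = a i k := by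
    intro i k; simp only [ha]; split <;> norm_num
  have hdeg : ∀ i, (G.degree i : ℝ) = ∑ k, a i k := by
    intro i
    simp only [ha]
    rw [Finset.sum_boole]
    congr 1
    rw [SimpleGraph.degree, SimpleGraph.neighborFinset_eq_filter]
  have hsumd : ∑ i, (G.degree i : ℝ) = 2 * M := by
    have h : (∑ v, G.degree v) = 2 * m := by
      rw [hm]; exact G.sum_degrees_eq_twice_card_edges
    calc ∑ i, (G.degree i : ℝ) = ((∑ v, G.degree v : ℕ) : ℝ) := by push_cast; rfl
      _ = 2 * M := by rw [h]; push_cast; rfl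
  set S : ℝ := ∑ v, (G.degree v : ℝ) ^ 2 with hS
  have hNcard : (Fintype.card V : ℝ) = N := by rw [hN, hn]
  have hN2 : (2 : ℝ) ≤ N := by rw [hN]; exact_mod_cast hn2
  -- pointwise Cauchy–Schwarz
  have key : ∀ i j, ((G.degree i : ℝ) - G.degree j) ^ 2 ≤
      (N - 2) * ((∑ k, (a i k - a j k) ^ 2) - 2 * a i j) := by
    intro i j
    by_cases hij : i = j
    · subst hij; simp [ha_self]
    · have hsub : ({i, j} : Finset V) ⊆ univ := Finset.subset_univ _
      have hcards : ((univ \ {i, j} : Finset V).card : ℝ) = N - 2 := by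
        rw [Finset.card_sdiff_of_subset hsub, Finset.card_pair hij, Finset.card_univ]
        have h2 : 2 ≤ Fintype.card V := hn ▸ hn2
        push_cast [Nat.cast_sub h2]
        rw [hNcard]
      have hpairsum : ∑ k ∈ ({i, j} : Finset V), (a i k - a j k) = 0 := by
        rw [Finset.sum_pair hij, ha_self, ha_self, ha_symm j i]
        ring
      have hdiff : (G.degree i : ℝ) - G.degree j = ∑ k ∈ univ \ {i, j}, (a i k - a j k) := by
        have h0 := Finset.sum_sdiff (f := fun k => a i k - a j k) hsub
        rw [hdeg, hdeg, ← Finset.sum_sub_distrib, ← h0, hpairsum, add_zero]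
      have hcs := sq_sum_le_card_mul_sum_sq (s := univ \ ({i, j} : Finset V))
        (f := fun k => a i k - a j k)
      rw [← hdiff] at hcs
      have hsdiff : ∑ k ∈ univ \ ({i, j} : Finset V), (a i k - a j k) ^ 2
          = (∑ k, (a i k - a j k) ^ 2) - 2 * a i j := by
        have h0 := Finset.sum_sdiff (f := fun k => (a i k - a j k) ^ 2) hsub
        have hpair : ∑ k ∈ ({i, j} : Finset V), (a i k - a j k) ^ 2 = 2 * a i j := by
          rw [Finset.sum_pair hij, ha_self, ha_self, ha_symm j i]
          have := ha_sq i j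
          nlinarith [ha_sq i j]
        linarith [h0, hpair]
      calc ((G.degree i : ℝ) - G.degree j) ^ 2
          ≤ ((univ \ ({i, j} : Finset V)).card : ℝ) *
            ∑ k ∈ univ \ ({i, j} : Finset V), (a i k - a j k) ^ 2 := hcs
        _ = (N - 2) * ((∑ k, (a i k - a j k) ^ 2) - 2 * a i j) := by
            rw [hcards, hsdiff]
  -- sum the pointwise bound over all ordered pairs
  have hmain : ∑ i, ∑ j, ((G.degree i : ℝ) - G.degree j) ^ 2 ≤
      (N - 2) * ∑ i, ∑ j, ((∑ k, (a i k - a j k) ^ 2) - 2 * a i j) := by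
    rw [Finset.mul_sum]
    refine Finset.sum_le_sum fun i _ => ?_
    rw [Finset.mul_sum]
    exact Finset.sum_le_sum fun j _ => key i j
  -- identities
  have hcolsum : ∀ k, ∑ i, a i k = (G.degree k : ℝ) := by
    intro k
    rw [hdeg k]
    exact Finset.sum_congr rfl fun i _ => ha_symm i k
  have hA : ∑ i, ∑ j, a i j = 2 * M := by
    rw [← hsumd]
    exact Finset.sum_congr rfl fun i _ => (hdeg i).symm
  have L1 : ∑ i, ∑ j, ((G.degree i : ℝ) - G.degree j) ^ 2 = 2 * N * S - 2 * (2 * M) ^ 2 := by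
    have expand : ∀ i j : V, ((G.degree i : ℝ) - G.degree j) ^ 2
        = (G.degree i : ℝ) ^ 2 + (G.degree j : ℝ) ^ 2
          - 2 * (G.degree i : ℝ) * (G.degree j : ℝ) := by intro i j; ring
    simp_rw [expand, Finset.sum_sub_distrib, Finset.sum_add_distrib, Finset.sum_const,
      Finset.card_univ, nsmul_eq_mul, mul_assoc, ← Finset.mul_sum, hsumd]
    rw [← Finset.sum_mul, hsumd, hNcard, ← hS]
    ring
  have R1 : ∑ i, ∑ j, ((∑ k, (a i k - a j k) ^ 2) - 2 * a i j)
      = 4 * N * M - 2 * S - 4 * M := by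
    have expand : ∀ i j : V, (∑ k, (a i k - a j k) ^ 2)
        = (∑ k, a i k) + (∑ k, a j k) - 2 * ∑ k, a i k * a j k := by
      intro i j
      rw [Finset.mul_sum, ← Finset.sum_add_distrib, ← Finset.sum_sub_distrib]
      refine Finset.sum_congr rfl fun k _ => ?_
      have h1 := ha_sq i k
      have h2 := ha_sq j k
      nlinarith [ha_sq i k, ha_sq j k]
    have hmix : ∑ i, ∑ j, (∑ k, a i k * a j k) = S := by
      have h1 : ∀ i, ∑ j, (∑ k, a i k * a j k) = ∑ k, a i k * (G.degree k : ℝ) := by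
        intro i
        rw [Finset.sum_comm]
        refine Finset.sum_congr rfl fun k _ => ?_
        rw [← Finset.mul_sum, hcolsum k]
      simp_rw [h1]
      rw [Finset.sum_comm, hS]
      refine Finset.sum_congr rfl fun k _ => ?_
      rw [← Finset.sum_mul, hcolsum k]
      ring
    simp_rw [expand, Finset.sum_sub_distrib, Finset.sum_add_distrib, ← hdeg,
      Finset.sum_const, Finset.card_univ, nsmul_eq_mul, ← Finset.mul_sum]
    rw [hmix, hsumd, hA, hNcard]
    ring
  rw [L1, R1] at hmain
  -- final algebra
  have hpos : (0 : ℝ) < N - 1 := by linarith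
  have hrw : M * (2 * M / (N - 1) + N - 2) = M * (2 * M + (N - 1) * (N - 2)) / (N - 1) := by
    rw [eq_div_iff hpos.ne']
    have hx : 2 * M / (N - 1) * (N - 1) = 2 * M := div_mul_cancel₀ _ hpos.ne'
    linear_combination M * hx
  rw [hrw, le_div_iff₀ hpos]
  nlinarith [hmain]
end

section
/- For any finite simple graph G with n vertices and m edges, the sum over all vertices of the square of their degrees is at most 2m^2/n + mn (a weakened form of de Caen's bound sufficient for O(m^2/n + mn) complexity estimates). -/
open Finset

/-- Weakened de Caen bound: `∑ d(v)^2 ≤ 2m²/n + mn`. -/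
theorem sum_degree_sq_upper_bound {V : Type*} [Fintype V] [DecidableEq V]
    (G : SimpleGraph V) [DecidableRel G.Adj]
    (n m : ℕ) (hn : n = Fintype.card V) (hm : m = G.edgeFinset.card) (hn1 : 1 ≤ n) :
    ∑ v : V, (G.degree v : ℝ) ^ 2 ≤ 2 * (m : ℝ) ^ 2 / (n : ℝ) + (m : ℝ) * (n : ℝ) := by
  classical
  set D : V → ℝ := fun v => (G.degree v : ℝ) with hD
  have hDnn : ∀ v, 0 ≤ D v := fun v => Nat.cast_nonneg _
  have hsum : ∑ v, D v = 2 * m := by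
    have h := G.sum_degrees_eq_twice_card_edges
    have h2 : ((∑ v, G.degree v : ℕ) : ℝ) = ((2 * G.edgeFinset.card : ℕ) : ℝ) := by
      exact_mod_cast congrArg (fun k : ℕ => (k : ℝ)) h
    simpa [hm, Nat.cast_sum] using h2
  have hcap : ∀ v, D v ≤ (n : ℝ) - 1 := by
    intro v
    have h := G.degree_lt_card_verts v
    have h' : G.degree v + 1 ≤ n := by omega
    have := (Nat.cast_le (α := ℝ)).2 h'
    push_cast at this
    linarith
  set s : V → ℝ := fun u => ∑ v ∈ G.neighborFinset u, D v with hs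
  -- s u + D u ≤ 2m
  have h1 : ∀ u, D u + s u ≤ 2 * m := by
    intro u
    have hsub : insert u (G.neighborFinset u) ⊆ univ := subset_univ _
    have hnotmem : u ∉ G.neighborFinset u := by
      simp [SimpleGraph.mem_neighborFinset]
    have hins : ∑ v ∈ insert u (G.neighborFinset u), D v = D u + s u :=
      Finset.sum_insert hnotmem
    have hle : ∑ v ∈ insert u (G.neighborFinset u), D v ≤ ∑ v ∈ univ, D v :=
      Finset.sum_le_sum_of_subset_of_nonneg hsub (fun v _ _ => hDnn v)
    rw [hins, hsum] at *
    linarith [hle]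
  -- s u ≤ (n-1) * D u
  have h2 : ∀ u, s u ≤ ((n : ℝ) - 1) * D u := by
    intro u
    have hcard : (G.neighborFinset u).card = G.degree u := G.card_neighborFinset_eq_degree u
    calc s u ≤ ∑ _v ∈ G.neighborFinset u, ((n : ℝ) - 1) :=
          Finset.sum_le_sum (fun v _ => hcap v)
      _ = (G.degree u : ℝ) * ((n : ℝ) - 1) := by
          rw [Finset.sum_const, hcard]; simp [nsmul_eq_mul]
      _ = ((n : ℝ) - 1) * D u := by ring
  -- ∑ s = ∑ D^2
  have hQ : ∑ u, s u = ∑ v, D v ^ 2 := by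
    have : ∀ u, s u = ∑ v, if G.Adj u v then D v else 0 := by
      intro u
      rw [hs]
      simp only []
      rw [← Finset.sum_filter]
      congr 1
      ext v
      simp [SimpleGraph.mem_neighborFinset]
    simp only [this]
    rw [Finset.sum_comm]
    congr 1
    ext v
    have hfilt : (univ.filter (fun u => G.Adj u v)) = G.neighborFinset v := by
      ext u; simp [SimpleGraph.mem_neighborFinset, SimpleGraph.adj_comm]
    rw [← Finset.sum_filter, hfilt, Finset.sum_const,
        G.card_neighborFinset_eq_degree, nsmul_eq_mul]
    rw [hD]
    ring
  -- pointwise key inequality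
  have key : ∀ u, (n : ℝ) * s u ≤ (2 * m + (n : ℝ) * ((n : ℝ) - 1)) * D u - (n : ℝ) * D u ^ 2 := by
    intro u
    have ha := h1 u
    have hb := h2 u
    have hd := hDnn u
    have hc := hcap u
    nlinarith [mul_le_mul_of_nonneg_left hb (by linarith [hd, hc] : (0:ℝ) ≤ (n : ℝ) - D u),
      mul_le_mul_of_nonneg_left (by linarith : s u ≤ 2 * (m:ℝ) - D u) hd]
  -- sum it up
  set Q : ℝ := ∑ v, D v ^ 2 with hQdef
  have hkey : (n : ℝ) * Q ≤ (2 * m + (n : ℝ) * ((n : ℝ) - 1)) * (2 * m) - (n : ℝ) * Q := by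
    calc (n : ℝ) * Q = ∑ u, (n : ℝ) * s u := by
          rw [← Finset.mul_sum, hQ]
      _ ≤ ∑ u, ((2 * m + (n : ℝ) * ((n : ℝ) - 1)) * D u - (n : ℝ) * D u ^ 2) :=
          Finset.sum_le_sum (fun u _ => key u)
      _ = (2 * m + (n : ℝ) * ((n : ℝ) - 1)) * (∑ u, D u) - (n : ℝ) * ∑ u, D u ^ 2 := by
          rw [Finset.sum_sub_distrib, ← Finset.mul_sum, ← Finset.mul_sum]
      _ = (2 * m + (n : ℝ) * ((n : ℝ) - 1)) * (2 * m) - (n : ℝ) * Q := by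
          rw [hsum]
  have hn0 : (0 : ℝ) < n := by
    have : (1 : ℝ) ≤ n := by exact_mod_cast hn1
    linarith
  have hgoal : Q ≤ 2 * (m : ℝ) ^ 2 / (n : ℝ) + (m : ℝ) * (n : ℝ) := by
    rw [div_add' _ _ _ (ne_of_gt hn0), le_div_iff₀ hn0]
    have hmnn : (0 : ℝ) ≤ m := Nat.cast_nonneg m
    nlinarith [hkey]
  simpa [hQdef, hD] using hgoal
end

section
/- Abstract complexity bound: suppose a learning procedure on a graph with n ≥ 2 vertices and m edges processes, for each vertex u, a number of event-utilizations equal to sum_{i=1}^{d(u)} i, where d(u) is the degree of u and sum_u d(u) = 2m. Then the total number of event-utilizations T satisfies T ≥ 2m^2/n and T ≤ (1/2)(2m^2/(n-1) + m(n-2)) + m; in particular T = O(m^2/n + mn) and T = Ω(m^2/n). -/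
set_option linter.unusedSectionVars false

open Finset

section DeCaenAux

variable {V : Type*} [Fintype V] [DecidableEq V]

/-- adjacency indicator as a real number -/
private def ind (G : SimpleGraph V) [DecidableRel G.Adj] (u v : V) : ℝ :=
  if G.Adj u v then 1 else 0

/-- degree within a finset, as a real number -/
private def dg (G : SimpleGraph V) [DecidableRel G.Adj] (s : Finset V) (u : V) : ℝ :=
  ((s.filter (G.Adj u)).card : ℝ)

variable (G : SimpleGraph V) [DecidableRel G.Adj]

private lemma ind_self (u : V) : ind G u u = 0 := by
  simp [ind, G.irrefl]

private lemma ind_comm (u v : V) : ind G u v = ind G v u := by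
  simp only [ind, G.adj_comm]

private lemma ind_sq (u v : V) : ind G u v ^ 2 = ind G u v := by
  unfold ind; split <;> norm_num

private lemma ind_zero_or_one (u v : V) : ind G u v = 0 ∨ ind G u v = 1 := by
  unfold ind; split
  · right; rfl
  · left; rfl

private lemma dg_eq_sum (s : Finset V) (u : V) :
    dg G s u = ∑ v ∈ s, ind G u v := by
  unfold dg ind
  rw [Finset.card_filter]
  push_cast
  rfl

private lemma sum_ind_left (s : Finset V) (v : V) :
    ∑ u ∈ s, ind G u v = dg G s v := by
  rw [dg_eq_sum]
  exact Finset.sum_congr rfl fun u _ => ind_comm G u v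

private lemma dg_erase {s : Finset V} {v : V} (hv : v ∈ s) (u : V) :
    dg G (s.erase v) u = dg G s u - ind G u v := by
  rw [dg_eq_sum, dg_eq_sum, Finset.sum_erase_eq_sub hv]

/-- small pure case: 4 vertices -/
private lemma quad4 (x1 x2 x3 x4 x5 x6 : ℝ)
    (h1 : x1 = 0 ∨ x1 = 1) (h2 : x2 = 0 ∨ x2 = 1) (h3 : x3 = 0 ∨ x3 = 1)
    (h4 : x4 = 0 ∨ x4 = 1) (h5 : x5 = 0 ∨ x5 = 1) (h6 : x6 = 0 ∨ x6 = 1) :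
    2 * 3 * ((x1+x2+x3)^2 + (x1+x4+x5)^2 + (x2+x4+x6)^2 + (x3+x5+x6)^2) ≤
      ((x1+x2+x3) + (x1+x4+x5) + (x2+x4+x6) + (x3+x5+x6))^2
      + ((x1+x2+x3) + (x1+x4+x5) + (x2+x4+x6) + (x3+x5+x6)) * 3 * 2 := by
  rcases h1 with rfl|rfl <;> rcases h2 with rfl|rfl <;> rcases h3 with rfl|rfl <;>
    rcases h4 with rfl|rfl <;> rcases h5 with rfl|rfl <;> rcases h6 with rfl|rfl <;> norm_num

/-- small pure case: 3 vertices -/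
private lemma quad3 (x1 x2 x3 : ℝ)
    (h1 : x1 = 0 ∨ x1 = 1) (h2 : x2 = 0 ∨ x2 = 1) (h3 : x3 = 0 ∨ x3 = 1) :
    2 * 2 * ((x1+x2)^2 + (x1+x3)^2 + (x2+x3)^2) ≤
      ((x1+x2) + (x1+x3) + (x2+x3))^2 + ((x1+x2) + (x1+x3) + (x2+x3)) * 2 * 1 := by
  rcases h1 with rfl|rfl <;> rcases h2 with rfl|rfl <;> rcases h3 with rfl|rfl <;> norm_num

/-- **de Caen's inequality** in finset form:
`2(n-1) ∑ d² ≤ (∑ d)² + (∑ d)(n-1)(n-2)` where `d` is the degree within `s`. -/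
private theorem deCaen : ∀ (n : ℕ) (s : Finset V), s.card = n →
    2 * ((n : ℝ) - 1) * ∑ u ∈ s, dg G s u ^ 2 ≤
      (∑ u ∈ s, dg G s u) ^ 2 + (∑ u ∈ s, dg G s u) * ((n : ℝ) - 1) * ((n : ℝ) - 2) := by
  intro n
  induction n using Nat.strong_induction_on with
  | _ n ih =>
    intro s hs
    rcases Nat.lt_or_ge n 5 with hn5 | hn5
    · -- base cases n = 0,1,2,3,4
      interval_cases n
      · -- n = 0
        rw [Finset.card_eq_zero] at hs; subst hs; simp
      · -- n = 1
        obtain ⟨a, rfl⟩ := Finset.card_eq_one.mp hs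
        have : dg G {a} a = 0 := by
          rw [dg_eq_sum]; simp [ind_self]
        simp [this]
      · -- n = 2
        obtain ⟨a, b, hab, rfl⟩ := Finset.card_eq_two.mp hs
        have hda : dg G {a, b} a = ind G a b := by
          rw [dg_eq_sum, Finset.sum_insert (by simp [hab]), Finset.sum_singleton, ind_self]
          ring
        have hdb : dg G {a, b} b = ind G a b := by
          rw [dg_eq_sum, Finset.sum_insert (by simp [hab]), Finset.sum_singleton, ind_self,
            ind_comm G b a]
          ring
        rw [Finset.sum_insert (by simp [hab]), Finset.sum_singleton,
          Finset.sum_insert (by simp [hab]), Finset.sum_singleton, hda, hdb]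
        norm_num
        nlinarith [sq_nonneg (ind G a b)]
      · -- n = 3
        obtain ⟨a, b, c, hab, hac, hbc, rfl⟩ := Finset.card_eq_three.mp hs
        have hma : a ∉ ({b, c} : Finset V) := by simp [hab, hac]
        have hmb : b ∉ ({c} : Finset V) := by simp [hbc]
        have expand : ∀ u : V, dg G {a, b, c} u = ind G u a + ind G u b + ind G u c := by
          intro u
          rw [dg_eq_sum, Finset.sum_insert hma, Finset.sum_insert hmb, Finset.sum_singleton]
          ring
        have hda : dg G {a, b, c} a = ind G a b + ind G a c := by
          rw [expand, ind_self]; ring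
        have hdb : dg G {a, b, c} b = ind G a b + ind G b c := by
          rw [expand, ind_self, ind_comm G b a]; ring
        have hdc : dg G {a, b, c} c = ind G a c + ind G b c := by
          rw [expand, ind_self, ind_comm G c a, ind_comm G c b]; ring
        rw [Finset.sum_insert hma, Finset.sum_insert hmb, Finset.sum_singleton,
          Finset.sum_insert hma, Finset.sum_insert hmb, Finset.sum_singleton,
          hda, hdb, hdc]
        have := quad3 (ind G a b) (ind G a c) (ind G b c)
          (ind_zero_or_one G a b) (ind_zero_or_one G a c) (ind_zero_or_one G b c)
        push_cast
        linarith [this]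
      · -- n = 4
        obtain ⟨a, t, hat, rfl, ht3⟩ := Finset.card_eq_succ.mp hs
        obtain ⟨b, c, d, hbc, hbd, hcd, rfl⟩ := Finset.card_eq_three.mp ht3
        have hab : a ≠ b := by intro h; exact hat (by simp [h])
        have hac : a ≠ c := by intro h; exact hat (by simp [h])
        have had : a ≠ d := by intro h; exact hat (by simp [h])
        have hma : a ∉ ({b, c, d} : Finset V) := hat
        have hmb : b ∉ ({c, d} : Finset V) := by simp [hbc, hbd]
        have hmc : c ∉ ({d} : Finset V) := by simp [hcd]
        have expand : ∀ u : V,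
            dg G (insert a {b, c, d}) u = ind G u a + ind G u b + ind G u c + ind G u d := by
          intro u
          rw [dg_eq_sum, Finset.sum_insert hma, Finset.sum_insert hmb, Finset.sum_insert hmc,
            Finset.sum_singleton]
          ring
        have hda : dg G (insert a {b, c, d}) a = ind G a b + ind G a c + ind G a d := by
          rw [expand, ind_self]; ring
        have hdb : dg G (insert a {b, c, d}) b = ind G a b + ind G b c + ind G b d := by
          rw [expand, ind_self, ind_comm G b a]; ring
        have hdc : dg G (insert a {b, c, d}) c = ind G a c + ind G b c + ind G c d := by
          rw [expand, ind_self, ind_comm G c a, ind_comm G c b]; ring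
        have hdd : dg G (insert a {b, c, d}) d = ind G a d + ind G b d + ind G c d := by
          rw [expand, ind_self, ind_comm G d a, ind_comm G d b, ind_comm G d c]; ring
        rw [Finset.sum_insert hma, Finset.sum_insert hmb, Finset.sum_insert hmc,
          Finset.sum_singleton, Finset.sum_insert hma, Finset.sum_insert hmb,
          Finset.sum_insert hmc, Finset.sum_singleton, hda, hdb, hdc, hdd]
        have := quad4 (ind G a b) (ind G a c) (ind G a d) (ind G b c) (ind G b d) (ind G c d)
          (ind_zero_or_one G a b) (ind_zero_or_one G a c) (ind_zero_or_one G a d)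
          (ind_zero_or_one G b c) (ind_zero_or_one G b d) (ind_zero_or_one G c d)
        push_cast
        linarith [this]
    · -- induction step, n ≥ 5
      set N : ℝ := (n : ℝ) with hN
      have hN5 : (5 : ℝ) ≤ N := by rw [hN]; exact_mod_cast hn5
      set Q : ℝ := ∑ u ∈ s, dg G s u ^ 2 with hQ
      set D : ℝ := ∑ u ∈ s, dg G s u with hD
      -- the per-vertex inequality obtained from the induction hypothesis
      have key : ∀ v ∈ s,
          2 * (N - 2) * (Q - dg G s v ^ 2 - 2 * (∑ u ∈ s, dg G s u * ind G u v) + dg G s v) ≤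
            (D - 2 * dg G s v) ^ 2 + (N - 2) * (N - 3) * (D - 2 * dg G s v) := by
        intro v hv
        have hcard : (s.erase v).card = n - 1 := by
          rw [Finset.card_erase_of_mem hv, hs]
        have hIH := ih (n - 1) (by omega) (s.erase v) hcard
        have hcast : ((n - 1 : ℕ) : ℝ) = N - 1 := by
          have : (1 : ℕ) ≤ n := by omega
          push_cast [Nat.cast_sub this]
          ring
        rw [hcast] at hIH
        -- rewrite degrees on the erased set
        have hdrw : ∀ u : V, dg G (s.erase v) u = dg G s u - ind G u v := dg_erase G hv
        have hQ' : ∑ u ∈ s.erase v, dg G (s.erase v) u ^ 2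
            = Q - dg G s v ^ 2 - 2 * (∑ u ∈ s, dg G s u * ind G u v) + dg G s v := by
          calc ∑ u ∈ s.erase v, dg G (s.erase v) u ^ 2
              = ∑ u ∈ s.erase v, (dg G s u - ind G u v) ^ 2 := by
                exact Finset.sum_congr rfl fun u _ => by rw [hdrw u]
            _ = (∑ u ∈ s, (dg G s u - ind G u v) ^ 2) - (dg G s v - ind G v v) ^ 2 :=
                Finset.sum_erase_eq_sub hv
            _ = (∑ u ∈ s, (dg G s u ^ 2 - 2 * (dg G s u * ind G u v) + ind G u v)) -
                  dg G s v ^ 2 := by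
                rw [ind_self]
                congr 1
                · exact Finset.sum_congr rfl fun u _ => by
                    have h2 := ind_sq G u v
                    nlinarith [h2]
                · ring
            _ = Q - dg G s v ^ 2 - 2 * (∑ u ∈ s, dg G s u * ind G u v) + dg G s v := by
                rw [Finset.sum_add_distrib, Finset.sum_sub_distrib, ← Finset.mul_sum,
                  sum_ind_left]
                ring
        have hD' : ∑ u ∈ s.erase v, dg G (s.erase v) u = D - 2 * dg G s v := by
          calc ∑ u ∈ s.erase v, dg G (s.erase v) u
              = ∑ u ∈ s.erase v, (dg G s u - ind G u v) := by
                exact Finset.sum_congr rfl fun u _ => by rw [hdrw u]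
            _ = (∑ u ∈ s, (dg G s u - ind G u v)) - (dg G s v - ind G v v) :=
                Finset.sum_erase_eq_sub hv
            _ = D - 2 * dg G s v := by
                rw [ind_self, Finset.sum_sub_distrib, sum_ind_left]
                ring
        rw [hQ', hD'] at hIH
        calc 2 * (N - 2) * (Q - dg G s v ^ 2 - 2 * (∑ u ∈ s, dg G s u * ind G u v) + dg G s v)
            = 2 * (N - 1 - 1) * (Q - dg G s v ^ 2 - 2 * (∑ u ∈ s, dg G s u * ind G u v)
                + dg G s v) := by ring
          _ ≤ (D - 2 * dg G s v) ^ 2 + (D - 2 * dg G s v) * (N - 1 - 1) * (N - 1 - 2) := hIH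
          _ = (D - 2 * dg G s v) ^ 2 + (N - 2) * (N - 3) * (D - 2 * dg G s v) := by ring
      -- sum the per-vertex inequalities over s
      have hsum := Finset.sum_le_sum key
      -- auxiliary sum identities
      have hTT : ∑ v ∈ s, (∑ u ∈ s, dg G s u * ind G u v) = Q := by
        rw [Finset.sum_comm]
        calc ∑ u ∈ s, ∑ v ∈ s, dg G s u * ind G u v
            = ∑ u ∈ s, dg G s u * (∑ v ∈ s, ind G u v) := by
              exact Finset.sum_congr rfl fun u _ => (Finset.mul_sum _ _ _).symm
          _ = ∑ u ∈ s, dg G s u * dg G s u := by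
              exact Finset.sum_congr rfl fun u _ => by rw [← dg_eq_sum]
          _ = Q := by rw [hQ]; exact Finset.sum_congr rfl fun u _ => (sq (dg G s u)).symm ▸ by ring
      have hcards : ((s.card : ℝ)) = N := by rw [hs]
      have hLHS : ∑ v ∈ s, 2 * (N - 2) *
          (Q - dg G s v ^ 2 - 2 * (∑ u ∈ s, dg G s u * ind G u v) + dg G s v)
          = 2 * (N - 2) * ((N - 3) * Q + D) := by
        rw [← Finset.mul_sum]
        congr 1
        have : ∑ v ∈ s, (Q - dg G s v ^ 2 - 2 * (∑ u ∈ s, dg G s u * ind G u v) + dg G s v)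
            = ∑ v ∈ s, (Q - dg G s v ^ 2 - 2 * (∑ u ∈ s, dg G s u * ind G u v)) + D := by
          rw [Finset.sum_add_distrib]
        rw [this, Finset.sum_sub_distrib, Finset.sum_sub_distrib, Finset.sum_const, hs,
          ← Finset.mul_sum, hTT, ← hQ, nsmul_eq_mul]
        ring
      have hRHS : ∑ v ∈ s, ((D - 2 * dg G s v) ^ 2 + (N - 2) * (N - 3) * (D - 2 * dg G s v))
          = (N * D ^ 2 - 4 * D ^ 2 + 4 * Q) + (N - 2) * (N - 3) * (N * D - 2 * D) := by
        rw [Finset.sum_add_distrib, ← Finset.mul_sum]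
        congr 1
        · calc ∑ v ∈ s, (D - 2 * dg G s v) ^ 2
              = ∑ v ∈ s, (D ^ 2 - 4 * D * dg G s v + 4 * dg G s v ^ 2) := by
                exact Finset.sum_congr rfl fun v _ => by ring
            _ = N * D ^ 2 - 4 * D ^ 2 + 4 * Q := by
                rw [Finset.sum_add_distrib, Finset.sum_sub_distrib, Finset.sum_const, hs,
                  ← Finset.mul_sum, ← hD, ← Finset.mul_sum, ← hQ, nsmul_eq_mul]
                ring
        · congr 1
          rw [Finset.sum_sub_distrib, Finset.sum_const, hs, ← Finset.mul_sum, ← hD,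
            nsmul_eq_mul]
      rw [hLHS, hRHS] at hsum
      -- divide by (N - 4) > 0
      have hN4 : (0 : ℝ) < N - 4 := by linarith
      have hmul : (N - 4) * (2 * (N - 1) * Q) ≤ (N - 4) * (D ^ 2 + D * (N - 1) * (N - 2)) := by
        nlinarith [hsum]
      exact le_of_mul_le_mul_left hmul hN4

end DeCaenAux

private lemma gauss_sum_real (k : ℕ) : ∑ i ∈ Finset.Icc 1 k, (i : ℝ) = k * (k + 1) / 2 := by
  induction k with
  | zero => simp
  | succ k ihk =>
    rw [Finset.sum_Icc_succ_top (by omega : 1 ≤ k + 1), ihk]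
    push_cast
    ring

/-- Complexity of 1-hop-subgraph-based learning: the total number of event
utilizations `T = ∑_u ∑_{i=1}^{d(u)} i` satisfies `2m²/n ≤ T` and
`T ≤ (1/2)(2m²/(n-1) + m(n-2)) + m`. -/
theorem one_hop_subgraph_complexity {V : Type*} [Fintype V] [DecidableEq V]
    (G : SimpleGraph V) [DecidableRel G.Adj]
    (n m : ℕ) (hn : n = Fintype.card V) (hm : m = G.edgeFinset.card) (hn2 : 2 ≤ n)
    (T : ℝ) (hT : T = ∑ u : V, ∑ i ∈ Finset.Icc 1 (G.degree u), (i : ℝ)) :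
    2 * (m : ℝ) ^ 2 / (n : ℝ) ≤ T ∧
    T ≤ (1 / 2) * (2 * (m : ℝ) ^ 2 / ((n : ℝ) - 1) + (m : ℝ) * ((n : ℝ) - 2))
        + (m : ℝ) := by
  classical
  set N : ℝ := (n : ℝ) with hNdef
  have hN2 : (2 : ℝ) ≤ N := by rw [hNdef]; exact_mod_cast hn2
  -- degrees as dg over univ
  have hdeg : ∀ u : V, (G.degree u : ℝ) = dg G Finset.univ u := by
    intro u
    unfold dg
    rw [← SimpleGraph.neighborFinset_eq_filter]
    rfl
  set Q : ℝ := ∑ u : V, (G.degree u : ℝ) ^ 2 with hQ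
  set D : ℝ := ∑ u : V, (G.degree u : ℝ) with hD
  -- handshake
  have hDm : D = 2 * m := by
    have h := SimpleGraph.sum_degrees_eq_twice_card_edges G
    rw [hD, hm]
    exact_mod_cast congrArg (Nat.cast : ℕ → ℝ) h
  -- T = (Q + D)/2
  have hTQD : T = (Q + D) / 2 := by
    rw [hT]
    have : ∀ u : V, ∑ i ∈ Finset.Icc 1 (G.degree u), (i : ℝ)
        = ((G.degree u : ℝ) ^ 2 + (G.degree u : ℝ)) / 2 := by
      intro u
      rw [gauss_sum_real]
      ring
    rw [Finset.sum_congr rfl fun u _ => this u, ← Finset.sum_div, Finset.sum_add_distrib]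
  -- Cauchy-Schwarz : D^2 ≤ N * Q
  have hCS : D ^ 2 ≤ N * Q := by
    have h := Finset.sum_mul_sq_le_sq_mul_sq Finset.univ (fun u : V => (G.degree u : ℝ))
      (fun _ => (1 : ℝ))
    simp only [mul_one, one_pow] at h
    have hcard : ∑ _u : V, (1 : ℝ) = N := by
      rw [Finset.sum_const, nsmul_eq_mul, mul_one, hNdef, hn, Finset.card_univ]
    rw [hcard] at h
    calc D ^ 2 ≤ Q * N := h
      _ = N * Q := by ring
  have hmnn : (0 : ℝ) ≤ (m : ℝ) := by positivity
  have hNpos : (0 : ℝ) < N := by linarith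
  constructor
  · -- lower bound
    rw [div_le_iff₀ hNpos, hTQD, hDm]
    nlinarith [hCS, hDm, mul_nonneg hmnn (le_of_lt hNpos)]
  · -- upper bound via de Caen
    have hcardu : (Finset.univ : Finset V).card = n := by rw [hn, Finset.card_univ]
    have hdc := deCaen G n Finset.univ hcardu
    have hQrw : ∑ u ∈ Finset.univ, dg G Finset.univ u ^ 2 = Q := by
      rw [hQ]; exact Finset.sum_congr rfl fun u _ => by rw [hdeg u]
    have hDrw : ∑ u ∈ Finset.univ, dg G Finset.univ u = D := by
      rw [hD]; exact Finset.sum_congr rfl fun u _ => by rw [hdeg u]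
    rw [hQrw, hDrw, hDm] at hdc
    -- hdc : 2 * (N - 1) * Q ≤ (2m)^2 + 2m * (N-1) * (N-2)
    have hN1 : (0 : ℝ) < N - 1 := by linarith
    set X : ℝ := 2 * (m : ℝ) ^ 2 / (N - 1) with hX
    have hXmul : X * (N - 1) = 2 * (m : ℝ) ^ 2 := by
      rw [hX, div_mul_cancel₀]
      exact ne_of_gt hN1
    have h5 : (N - 1) * Q ≤ (N - 1) * (X + (m : ℝ) * (N - 2)) := by nlinarith [hdc, hXmul]
    have h6 : Q ≤ X + (m : ℝ) * (N - 2) := le_of_mul_le_mul_left h5 hN1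
    rw [hTQD, hDm]
    linarith [h6]
end
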